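/- arXiv:2410.06764 — 4 statements merged into one kernel-verified Lean document; each statement's English description precedes it below -/
import Mathlib

section
/- If f is an elementary integral circulation on a finite connected undirected graph with cycle rank r, then the L-infinity norm of f is at most r, i.e., |f(e)| <= r for every edge e. -/
open Finset

/-- Flow conservation at every vertex: an integral circulation on a graph whose
edges are given a reference orientation by `src` and `tgt`. -/
def IsCirculation {V E : Type} [Fintype E] [DecidableEq V] (src tgt : E → V) (f : E → ℤ) : Prop :=
  ∀ v : V, ∑ e : E, (if tgt e = v then f e else 0) = ∑ e : E, (if src e = v then f e else 0)

/-- Two vertices are adjacent via an edge in `S` (edges viewed as undirected). -/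
def EdgeAdj {V E : Type} (src tgt : E → V) (S : Set E) (a b : V) : Prop :=
  ∃ e ∈ S, (src e = a ∧ tgt e = b) ∨ (src e = b ∧ tgt e = a)

/-- Reachability using only edges in `S`. -/
def Reach {V E : Type} (src tgt : E → V) (S : Set E) : V → V → Prop :=
  Relation.ReflTransGen (EdgeAdj src tgt S)

/-- The (multi)graph is connected. -/
def GraphConnected {V E : Type} (src tgt : E → V) : Prop :=
  ∀ a b : V, Reach src tgt Set.univ a b

/-- `v` is an endpoint of some edge in `S`. -/
def Touches {V E : Type} (src tgt : E → V) (S : Set E) (v : V) : Prop :=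
  ∃ e ∈ S, src e = v ∨ tgt e = v

/-- The edge set `S` induces a connected subgraph (on the vertices it touches). -/
def ConnectedOn {V E : Type} (src tgt : E → V) (S : Set E) : Prop :=
  ∀ a b : V, Touches src tgt S a → Touches src tgt S b → Reach src tgt S a b

/-- Degree of `v` in the support of `f` (loops counted twice). -/
def suppDegree {V E : Type} [Fintype E] [DecidableEq V] (src tgt : E → V) (f : E → ℤ) (v : V) : ℕ :=
  (univ.filter fun e => f e ≠ 0 ∧ src e = v).card +
  (univ.filter fun e => f e ≠ 0 ∧ tgt e = v).card

/-- A cycle flow: a circulation whose support forms a single (undirected) cycle.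
The support is nonempty, connected, and every vertex it touches has degree 2 in it. -/
def IsCycleFlow {V E : Type} [Fintype E] [DecidableEq V] (src tgt : E → V) (f : E → ℤ) : Prop :=
  IsCirculation src tgt f ∧ (∃ e, f e ≠ 0) ∧
    ConnectedOn src tgt {e | f e ≠ 0} ∧
    ∀ v : V, Touches src tgt {e | f e ≠ 0} v → suppDegree src tgt f v = 2

/-- A unit cycle flow: a cycle flow with values in `{-1, 0, 1}`. -/
def IsUnitCycleFlow {V E : Type} [Fintype E] [DecidableEq V] (src tgt : E → V) (f : E → ℤ) : Prop :=
  IsCycleFlow src tgt f ∧ ∀ e, f e = 0 ∨ f e = 1 ∨ f e = -1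

/-- `f` contains `g`: on every edge, `|g e| ≤ |f e|` and they have the same sign
whenever `g e ≠ 0`. -/
def FlowContains {E : Type} (f g : E → ℤ) : Prop :=
  ∀ e, |g e| ≤ |f e| ∧ (g e ≠ 0 → 0 < g e * f e)

/-- A circulation is elementary if it does not contain twice a unit cycle flow. -/
def IsElementary {V E : Type} [Fintype E] [DecidableEq V] (src tgt : E → V) (f : E → ℤ) : Prop :=
  ¬ ∃ C : E → ℤ, IsUnitCycleFlow src tgt C ∧ FlowContains f (fun e => 2 * C e)

/-- `T` is a spanning tree: its edges connect all vertices and `|T| = |V| - 1`. -/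
def IsSpanningTree {V E : Type} [Fintype V] [Fintype E] [DecidableEq V] [DecidableEq E]
    (src tgt : E → V) (T : Finset E) : Prop :=
  (∀ a b : V, Reach src tgt ↑T a b) ∧ T.card + 1 = Fintype.card V

/-- Number of connected components of the subgraph on all of `V` using edges of `S`. -/
noncomputable def numComponents {V E : Type} (src tgt : E → V) (S : Set E) : ℕ :=
  Nat.card (Quot (Reach src tgt S))

open Finset

section Helpers

lemma sign_trans {a b c : ℤ} (h1 : 0 < a * b) (h2 : 0 < b * c) : 0 < a * c := by
  rcases lt_trichotomy b 0 with h|h|h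
  · have ha : a < 0 := by nlinarith
    have hc : c < 0 := by nlinarith
    nlinarith
  · simp [h] at h1
  · have ha : 0 < a := by nlinarith
    have hc : 0 < c := by nlinarith
    exact mul_pos ha hc

lemma int_sub_abs {a c : ℤ} (h1 : |c| ≤ |a|) (h2 : c ≠ 0 → 0 < c * a) :
    |a - c| = |a| - |c| ∧ (a - c ≠ 0 → 0 < (a - c) * a) := by
  rcases eq_or_ne c 0 with hc | hc
  · subst hc
    refine ⟨by simp, fun h => ?_⟩
    have ha : a ≠ 0 := by simpa using h
    simpa using mul_self_pos.2 ha
  · have h2' := h2 hc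
    rcases lt_trichotomy a 0 with ha|ha|ha
    · have hcneg : c < 0 := by nlinarith
      rw [abs_of_neg ha, abs_of_neg hcneg] at h1
      have hac : a ≤ c := by omega
      rw [abs_of_neg ha, abs_of_neg hcneg]
      constructor
      · have h3 : a - c ≤ 0 := by omega
        rw [abs_of_nonpos h3]; ring
      · intro h
        have hlt : a - c < 0 := by omega
        nlinarith
    · rw [ha, abs_zero] at h1
      exact absurd (abs_eq_zero.1 (le_antisymm h1 (abs_nonneg c))) hc
    · have hcpos : 0 < c := by nlinarith
      rw [abs_of_pos ha, abs_of_pos hcpos] at h1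
      have hac : c ≤ a := by omega
      rw [abs_of_pos ha, abs_of_pos hcpos]
      constructor
      · have h3 : 0 ≤ a - c := by omega
        rw [abs_of_nonneg h3]
      · intro h
        have hlt : 0 < a - c := by omega
        nlinarith

/-- shift identity on Ico sums -/
lemma sum_Ico_shift {M : Type*} [AddCommMonoid M] (F : ℕ → M) {i j : ℕ} (hij : i < j)
    (hper : F j = F i) : ∑ k ∈ Ico i j, F (k + 1) = ∑ k ∈ Ico i j, F k := by
  have h1 : ∑ k ∈ Ico i j, F (k + 1) = ∑ k ∈ Ico (i+1) (j+1), F k := by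
    rw [Finset.sum_Ico_eq_sum_range, Finset.sum_Ico_eq_sum_range]
    simp only [Nat.add_sub_add_right]
    exact Finset.sum_congr rfl (fun k _ => by congr 1; omega)
  rw [h1, Finset.sum_Ico_succ_top (by omega), hper,
    Finset.sum_eq_sum_Ico_succ_bot hij]
  exact add_comm _ _

end Helpers


section Extraction

variable {V E : Type} [Fintype V] [Fintype E] [DecidableEq V] [DecidableEq E]

lemma exists_unit_cycle (src tgt : E → V) (g : E → ℤ) (hg : IsCirculation src tgt g)
    (e0 : E) (h0 : g e0 ≠ 0) :
    ∃ C : E → ℤ, IsUnitCycleFlow src tgt C ∧ FlowContains g C := by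
  classical
  set s : E → V := fun e => if 0 < g e then src e else tgt e with hs_def
  set t : E → V := fun e => if 0 < g e then tgt e else src e with ht_def
  have step : ∀ u : V, (∃ e, g e ≠ 0 ∧ t e = u) → ∃ e, g e ≠ 0 ∧ s e = u := by
    rintro u ⟨e', he', hte'⟩
    have h1 : ∀ e : E, (if s e = u then |g e| else 0) - (if t e = u then |g e| else 0)
        = (if src e = u then g e else 0) - (if tgt e = u then g e else 0) := by
      intro e
      rcases lt_trichotomy (g e) 0 with h|h|h
      · have h' : ¬ 0 < g e := by omega
        simp only [hs_def, ht_def, if_neg h', abs_of_neg h]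
        split_ifs <;> ring
      · simp [h]
      · simp only [hs_def, ht_def, if_pos h, abs_of_pos h]
    have h2 : ∑ e : E, ((if s e = u then |g e| else 0) - (if t e = u then |g e| else 0)) = 0 := by
      rw [Finset.sum_congr rfl fun e _ => h1 e, Finset.sum_sub_distrib, sub_eq_zero]
      exact (hg u).symm
    rw [Finset.sum_sub_distrib, sub_eq_zero] at h2
    have hBpos : 0 < ∑ e : E, (if t e = u then |g e| else 0) := by
      have hle : |g e'| ≤ ∑ e : E, (if t e = u then |g e| else 0) := by
        have := Finset.single_le_sum (f := fun e => if t e = u then |g e| else 0)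
          (fun e _ => by split_ifs; exacts [abs_nonneg _, le_refl 0]) (Finset.mem_univ e')
        simpa [hte'] using this
      have := abs_pos.2 he'
      omega
    rw [← h2] at hBpos
    by_contra hcon
    push_neg at hcon
    have hzero : ∑ e : E, (if s e = u then |g e| else 0) = 0 := by
      refine Finset.sum_eq_zero fun e _ => ?_
      by_cases h : s e = u
      · by_cases h2 : g e = 0
        · simp [h, h2]
        · exact absurd h (hcon e h2)
      · simp [h]
    omega
  have step' : ∀ e : E, ∃ e', g e ≠ 0 → (g e' ≠ 0 ∧ s e' = t e) := by
    intro e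
    by_cases h : g e = 0
    · exact ⟨e, fun h' => absurd h h'⟩
    · obtain ⟨e', h1, h2⟩ := step (t e) ⟨e, h, rfl⟩
      exact ⟨e', fun _ => ⟨h1, h2⟩⟩
  choose F hF using step'
  set w : ℕ → E := fun n => F^[n] e0 with hw_def
  have hwsucc : ∀ n, w (n+1) = F (w n) := fun n => Function.iterate_succ_apply' F n e0
  have hsupp : ∀ n, g (w n) ≠ 0 := by
    intro n; induction n with
    | zero => exact h0
    | succ n ih => rw [hwsucc]; exact (hF (w n) ih).1
  have hst : ∀ n, s (w (n+1)) = t (w n) := fun n => by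
    rw [hwsucc]; exact (hF (w n) (hsupp n)).2
  set vt : ℕ → V := fun n => s (w n) with hvt_def
  have hrep : ∃ j, ∃ i, i < j ∧ vt i = vt j := by
    obtain ⟨a, b, hab, heq⟩ := Fintype.exists_ne_map_eq_of_card_lt
      (fun n : Fin (Fintype.card V + 1) => vt n) (by simp)
    rcases lt_or_gt_of_ne (show (a:ℕ) ≠ b from fun h => hab (Fin.ext h)) with h | h
    · exact ⟨b, a, h, heq⟩
    · exact ⟨a, b, h, heq.symm⟩
  set j := Nat.find hrep with hj_def
  obtain ⟨i, hij, hvij⟩ : ∃ i, i < j ∧ vt i = vt j := Nat.find_spec hrep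
  have hvinj : ∀ k l, k < l → l < j → vt k ≠ vt l := by
    intro k l hkl hlj h
    exact Nat.find_min hrep hlj ⟨k, hkl, h⟩
  set K := Finset.Ico i j with hK_def
  have hiK : i ∈ K := Finset.mem_Ico.2 ⟨le_refl i, hij⟩
  have hvinj' : ∀ k ∈ K, ∀ l ∈ K, vt k = vt l → k = l := by
    intro k hk l hl h
    rw [hK_def, Finset.mem_Ico] at hk hl
    rcases lt_trichotomy k l with h'|h'|h'
    · exact absurd h (hvinj k l h' hl.2)
    · exact h'
    · exact absurd h.symm (hvinj l k h' hk.2)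
  have hwinj : ∀ k ∈ K, ∀ l ∈ K, w k = w l → k = l := by
    intro k hk l hl h
    exact hvinj' k hk l hl (congrArg s h)
  set img := K.image w with himg_def
  set C : E → ℤ := fun e => if e ∈ img then (if 0 < g e then 1 else -1) else 0 with hC_def
  have hCmem : ∀ e ∈ img, C e = (if 0 < g e then 1 else -1) := fun e he => by
    simp only [hC_def, if_pos he]
  have hCnot : ∀ e, e ∉ img → C e = 0 := fun e he => by simp only [hC_def, if_neg he]
  have hCne : ∀ e, C e ≠ 0 ↔ e ∈ img := by
    intro e
    constructor
    · intro h; by_contra h'; exact h (hCnot e h')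
    · intro h; rw [hCmem e h]; split_ifs <;> omega
  have hsum_img : ∀ {M : Type} [AddCommMonoid M] (G : E → M),
      ∑ e : E, (if e ∈ img then G e else 0) = ∑ k ∈ K, G (w k) := by
    intro M _ G
    rw [Finset.sum_ite_mem, Finset.univ_inter, himg_def, Finset.sum_image hwinj]
  have hshift : ∀ {M : Type} [AddCommMonoid M] (G : V → M) (u : V),
      ∑ k ∈ K, (if vt (k+1) = u then G u else 0) = ∑ k ∈ K, (if vt k = u then G u else 0) := by
    intro M _ G u
    exact sum_Ico_shift (fun k => if vt k = u then G u else 0) hij (by simp [hvij])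
  have hends : ∀ k, (vt k = src (w k) ∧ vt (k+1) = tgt (w k)) ∨
      (vt k = tgt (w k) ∧ vt (k+1) = src (w k)) := by
    intro k
    have h3 : vt (k+1) = t (w k) := hst k
    by_cases h : 0 < g (w k)
    · left
      exact ⟨by simp only [hvt_def, hs_def]; rw [if_pos h],
        by rw [h3]; simp only [ht_def]; rw [if_pos h]⟩
    · right
      exact ⟨by simp only [hvt_def, hs_def]; rw [if_neg h],
        by rw [h3]; simp only [ht_def]; rw [if_neg h]⟩
  have hcont : FlowContains g C := by
    intro e
    by_cases he : e ∈ img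
    · obtain ⟨k, hk, hwk⟩ := Finset.mem_image.1 he
      have hge : g e ≠ 0 := hwk ▸ hsupp k
      rw [hCmem e he]
      have h1 : 1 ≤ |g e| := by
        have := abs_pos.2 hge; omega
      rcases lt_or_gt_of_ne hge with h|h
      · rw [if_neg (by omega : ¬ 0 < g e)]
        constructor
        · simpa using h1
        · intro _; simpa using h
      · rw [if_pos h]
        constructor
        · simpa using h1
        · intro _; simpa using h
    · rw [hCnot e he]; simp
  have hCcirc : IsCirculation src tgt C := by
    intro u
    have h1 : ∀ e : E, (if tgt e = u then C e else 0) - (if src e = u then C e else 0)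
        = (if e ∈ img then ((if t e = u then (1:ℤ) else 0) - (if s e = u then 1 else 0)) else 0) := by
      intro e
      by_cases he : e ∈ img
      · rw [hCmem e he, if_pos he]
        obtain ⟨k, hk, hwk⟩ := Finset.mem_image.1 he
        have hge : g e ≠ 0 := hwk ▸ hsupp k
        rcases lt_or_gt_of_ne hge with h|h
        · rw [if_neg (by omega : ¬ 0 < g e)]
          simp only [hs_def, ht_def, if_neg (show ¬ 0 < g e by omega)]
          split_ifs <;> ring
        · rw [if_pos h]
          simp only [hs_def, ht_def, if_pos h]
      · rw [hCnot e he, if_neg he]; simp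
    have h2 : ∑ e : E, (if tgt e = u then C e else 0) - ∑ e : E, (if src e = u then C e else 0)
        = ∑ k ∈ K, ((if t (w k) = u then (1:ℤ) else 0) - (if s (w k) = u then 1 else 0)) := by
      rw [← Finset.sum_sub_distrib, Finset.sum_congr rfl fun e _ => h1 e, hsum_img]
    have h4 : ∑ k ∈ K, ((if t (w k) = u then (1:ℤ) else 0) - (if s (w k) = u then 1 else 0)) = 0 := by
      have hre : ∀ k ∈ K, ((if t (w k) = u then (1:ℤ) else 0) - (if s (w k) = u then 1 else 0))
          = ((if vt (k+1) = u then (1:ℤ) else 0) - (if vt k = u then 1 else 0)) := by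
        intro k _
        rw [show t (w k) = vt (k+1) from (hst k).symm]
      rw [Finset.sum_congr rfl hre, Finset.sum_sub_distrib]
      have := hshift (fun _ => (1:ℤ)) u
      rw [this, sub_self]
    exact sub_eq_zero.mp (h2.trans h4)
  have htl : ∀ u, Touches src tgt {e | C e ≠ 0} u → ∃ l ∈ K, vt l = u := by
    intro u hu
    obtain ⟨e, heS, hor⟩ := hu
    have heimg : e ∈ img := (hCne e).1 heS
    obtain ⟨k, hk, hwk⟩ := Finset.mem_image.1 heimg
    have hk' := Finset.mem_Ico.1 (hK_def ▸ hk)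
    have hor' : vt k = u ∨ vt (k + 1) = u := by
      subst hwk
      rcases hends k with ⟨h1, h2⟩|⟨h1, h2⟩ <;> rcases hor with h|h
      · exact Or.inl (h1.trans h)
      · exact Or.inr (h2.trans h)
      · exact Or.inr (h2.trans h)
      · exact Or.inl (h1.trans h)
    rcases hor' with h|h
    · exact ⟨k, hk, h⟩
    · rcases lt_or_eq_of_le (Nat.succ_le_of_lt hk'.2) with h2|h2
      · exact ⟨k+1, Finset.mem_Ico.2 ⟨by omega, h2⟩, h⟩
      · refine ⟨i, hiK, ?_⟩
        rw [hvij, ← h2]; exact h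
  have hdeg : ∀ u : V, Touches src tgt {e | C e ≠ 0} u → suppDegree src tgt C u = 2 := by
    intro u hu
    have hcard : ∀ (p : E → V), (univ.filter fun e => C e ≠ 0 ∧ p e = u).card
        = ∑ k ∈ K, (if p (w k) = u then 1 else 0) := by
      intro p
      rw [Finset.card_filter]
      have hterm : ∀ e : E, (if C e ≠ 0 ∧ p e = u then (1:ℕ) else 0)
          = if e ∈ img then (if p e = u then 1 else 0) else 0 := by
        intro e
        by_cases he : e ∈ img
        · have h := (hCne e).2 he
          by_cases hp : p e = u <;> simp [he, hp, h]
        · have h : ¬ C e ≠ 0 := by simpa using hCnot e he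
          simp [he, h]
      rw [Finset.sum_congr rfl fun e _ => hterm e]
      exact hsum_img _
    have hper : ∀ k ∈ K, ((if src (w k) = u then (1:ℕ) else 0) + (if tgt (w k) = u then 1 else 0))
        = (if vt k = u then 1 else 0) + (if vt (k+1) = u then 1 else 0) := by
      intro k _
      rcases hends k with ⟨h1, h2⟩|⟨h1, h2⟩
      · rw [h1, h2]
      · rw [h1, h2]; exact add_comm _ _
    obtain ⟨l, hl, hvl⟩ := htl u hu
    have hS : ∑ k ∈ K, (if vt k = u then (1:ℕ) else 0) = 1 := by
      have := Finset.sum_eq_single_of_mem (f := fun k => if vt k = u then (1:ℕ) else 0) l hl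
        (fun b hb hbl => by
          rw [if_neg]
          intro hbu
          exact hbl (hvinj' b hb l hl (hbu.trans hvl.symm)))
      rw [this]; rw [if_pos hvl]
    unfold suppDegree
    rw [hcard src, hcard tgt, ← Finset.sum_add_distrib,
      Finset.sum_congr rfl hper, Finset.sum_add_distrib]
    have h5 := hshift (fun _ => (1:ℕ)) u
    rw [h5, hS]
  have hadj : ∀ k ∈ K, EdgeAdj src tgt {e | C e ≠ 0} (vt k) (vt (k+1)) := by
    intro k hk
    refine ⟨w k, ?_, ?_⟩
    · exact (hCne (w k)).2 (Finset.mem_image_of_mem w hk)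
    · rcases hends k with ⟨h1, h2⟩|⟨h1, h2⟩
      · exact Or.inl ⟨h1.symm, h2.symm⟩
      · exact Or.inr ⟨h2.symm, h1.symm⟩
  have hreach : ∀ l, i ≤ l → l ≤ j → Reach src tgt {e | C e ≠ 0} (vt i) (vt l) := by
    intro l hil
    induction l, hil using Nat.le_induction with
    | base => intro _; exact Relation.ReflTransGen.refl
    | succ n hn ih =>
      intro hnj
      have hk : n ∈ K := Finset.mem_Ico.2 ⟨hn, by omega⟩
      exact Relation.ReflTransGen.tail (ih (by omega)) (hadj n hk)
  have hsymm : Symmetric (EdgeAdj src tgt {e | C e ≠ 0}) := by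
    rintro a b ⟨e, he, h|h⟩
    · exact ⟨e, he, Or.inr h⟩
    · exact ⟨e, he, Or.inl h⟩
  have hConn : ConnectedOn src tgt {e | C e ≠ 0} := by
    intro a b ha hb
    obtain ⟨la, hla, hvla⟩ := htl a ha
    obtain ⟨lb, hlb, hvlb⟩ := htl b hb
    have hla' := Finset.mem_Ico.1 (hK_def ▸ hla)
    have hlb' := Finset.mem_Ico.1 (hK_def ▸ hlb)
    have h1 := hreach la hla'.1 (le_of_lt hla'.2)
    have h2 := hreach lb hlb'.1 (le_of_lt hlb'.2)
    exact Relation.ReflTransGen.trans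
      ((@Relation.ReflTransGen.symmetric _ (EdgeAdj src tgt {e | C e ≠ 0}) ⟨fun a b h => hsymm h⟩).symm _ _ (hvla ▸ h1)) (hvlb ▸ h2)
  have hunit : ∀ e, C e = 0 ∨ C e = 1 ∨ C e = -1 := by
    intro e
    by_cases he : e ∈ img
    · rw [hCmem e he]; split_ifs <;> simp
    · exact Or.inl (hCnot e he)
  refine ⟨C, ⟨⟨hCcirc, ⟨w i, (hCne (w i)).2 (Finset.mem_image_of_mem w hiK)⟩, hConn, hdeg⟩, hunit⟩, hcont⟩

end Extraction


set_option linter.unusedSectionVars false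
section Decompose

variable {V E : Type} [Fintype V] [Fintype E] [DecidableEq V] [DecidableEq E]

lemma flowContains_trans {f g h : E → ℤ} (h1 : FlowContains f g) (h2 : FlowContains g h) :
    FlowContains f h := by
  intro e
  obtain ⟨ha1, hs1⟩ := h1 e
  obtain ⟨ha2, hs2⟩ := h2 e
  refine ⟨le_trans ha2 ha1, fun hne => ?_⟩
  have hg : g e ≠ 0 := by
    intro h0
    rw [h0, abs_zero] at ha2
    exact hne (abs_nonpos_iff.1 ha2)
  exact sign_trans (hs2 hne) (hs1 hg)

lemma circulation_sub {src tgt : E → V} {g C : E → ℤ} (hg : IsCirculation src tgt g)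
    (hC : IsCirculation src tgt C) : IsCirculation src tgt (fun e => g e - C e) := by
  intro u
  have h1 : ∀ (p : E → V), ∑ e : E, (if p e = u then g e - C e else 0)
      = ∑ e : E, (if p e = u then g e else 0) - ∑ e : E, (if p e = u then C e else 0) := by
    intro p
    rw [← Finset.sum_sub_distrib]
    exact Finset.sum_congr rfl fun e _ => by split_ifs <;> simp
  dsimp only
  rw [h1, h1, hg u, hC u]

lemma flowContains_sub {g C : E → ℤ} (h : FlowContains g C) :
    FlowContains g (fun e => g e - C e) := fun e => by
  obtain ⟨ha, hs⟩ := h e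
  obtain ⟨h1, h2⟩ := int_sub_abs ha hs
  dsimp only
  constructor
  · rw [h1]; have := abs_nonneg (C e); omega
  · exact h2

lemma exists_unit_cycle_through (src tgt : E → V) :
    ∀ (n : ℕ) (g : E → ℤ), (∑ e : E, (g e).natAbs) ≤ n → IsCirculation src tgt g →
    ∀ e0 : E, g e0 ≠ 0 →
    ∃ C : E → ℤ, IsUnitCycleFlow src tgt C ∧ FlowContains g C ∧ C e0 ≠ 0 := by
  intro n
  induction n with
  | zero =>
    intro g hn hg e0 h0
    exfalso
    have h1 : (g e0).natAbs ≤ 0 := by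
      have h2 := Finset.single_le_sum (f := fun e => (g e).natAbs) (fun e _ => Nat.zero_le _)
        (Finset.mem_univ e0)
      omega
    have := Int.natAbs_eq_zero.1 (Nat.le_zero.1 h1)
    exact h0 this
  | succ n ih =>
    intro g hn hg e0 h0
    obtain ⟨C, hCunit, hCcont⟩ := exists_unit_cycle src tgt g hg e0 h0
    by_cases hC0 : C e0 ≠ 0
    · exact ⟨C, hCunit, hCcont, hC0⟩
    push_neg at hC0
    obtain ⟨e1, he1⟩ := hCunit.1.2.1
    set g' : E → ℤ := fun e => g e - C e with hg'_def
    have habs : ∀ e, |g' e| = |g e| - |C e| := fun e => (int_sub_abs (hCcont e).1 (hCcont e).2).1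
    have hg'circ : IsCirculation src tgt g' := circulation_sub hg hCunit.1.1
    have hg'cont : FlowContains g g' := flowContains_sub hCcont
    have hmeas : ∑ e : E, (g' e).natAbs ≤ n := by
      have hlt : ∑ e : E, (g' e).natAbs < ∑ e : E, (g e).natAbs := by
        refine Finset.sum_lt_sum (fun e _ => ?_) ⟨e1, Finset.mem_univ e1, ?_⟩
        · have h := habs e
          rw [Int.abs_eq_natAbs, Int.abs_eq_natAbs, Int.abs_eq_natAbs] at h
          omega
        · have h := habs e1
          have h1 : (C e1).natAbs ≠ 0 := fun hh => he1 (Int.natAbs_eq_zero.1 hh)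
          rw [Int.abs_eq_natAbs, Int.abs_eq_natAbs, Int.abs_eq_natAbs] at h
          omega
      omega
    have hg'e0 : g' e0 = g e0 := by simp only [hg'_def]; rw [hC0]; ring
    obtain ⟨C', hu', hc', hne'⟩ := ih g' hmeas hg'circ e0 (by rw [hg'e0]; exact h0)
    exact ⟨C', hu', flowContains_trans hg'cont hc', hne'⟩

lemma exists_family (src tgt : E → V) (e0 : E) :
    ∀ (m : ℕ) (g : E → ℤ), IsCirculation src tgt g → (m : ℤ) ≤ |g e0| →
    ∃ Cs : Fin m → (E → ℤ), (∀ i, IsUnitCycleFlow src tgt (Cs i)) ∧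
      (∀ i e, Cs i e ≠ 0 → 0 < Cs i e * g e) ∧
      (∀ e, ∑ i, |Cs i e| ≤ |g e|) ∧ (∀ i, Cs i e0 ≠ 0) := by
  intro m
  induction m with
  | zero =>
    intro g hg _
    exact ⟨fun i => i.elim0, fun i => i.elim0, fun i => i.elim0,
      fun e => by simpa using abs_nonneg (g e), fun i => i.elim0⟩
  | succ m ih =>
    intro g hg hm
    have h0 : g e0 ≠ 0 := by
      intro h
      rw [h, abs_zero] at hm
      have : (0:ℤ) < (m:ℤ) + 1 := by positivity
      push_cast at hm
      omega
    obtain ⟨C, hCu, hCc, hCe0⟩ :=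
      exists_unit_cycle_through src tgt (∑ e : E, (g e).natAbs) g le_rfl hg e0 h0
    set g' : E → ℤ := fun e => g e - C e with hg'_def
    have habs : ∀ e, |g' e| = |g e| - |C e| := fun e => (int_sub_abs (hCc e).1 (hCc e).2).1
    have hg'circ : IsCirculation src tgt g' := circulation_sub hg hCu.1.1
    have hg'cont : FlowContains g g' := flowContains_sub hCc
    have hCe0abs : |C e0| = 1 := by
      rcases hCu.2 e0 with h|h|h
      · exact absurd h hCe0
      · rw [h]; rfl
      · rw [h]; rfl
    have hm' : (m : ℤ) ≤ |g' e0| := by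
      rw [habs e0, hCe0abs]
      push_cast at hm ⊢
      omega
    obtain ⟨Cs, h1, h2, h3, h4⟩ := ih g' hg'circ hm'
    refine ⟨Fin.cons C Cs, fun i => Fin.cases hCu h1 i, ?_, ?_, fun i => Fin.cases hCe0 h4 i⟩
    · intro i
      refine Fin.cases ?_ ?_ i
      · intro e he
        simp only [Fin.cons_zero] at he ⊢
        exact (hCc e).2 he
      · intro i e he
        simp only [Fin.cons_succ] at he ⊢
        have hp := h2 i e he
        have hg'ne : g' e ≠ 0 := by
          intro hz; rw [hz, mul_zero] at hp; exact lt_irrefl 0 hp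
        exact sign_trans hp ((hg'cont e).2 hg'ne)
    · intro e
      rw [Fin.sum_univ_succ]
      simp only [Fin.cons_zero, Fin.cons_succ]
      have ha := h3 e
      have hb := habs e
      omega

end Decompose


section LinAlg

variable {V E : Type} [Fintype V] [Fintype E] [DecidableEq V] [DecidableEq E]

/-- Mod-2 boundary map of the graph. -/
def bdry (src tgt : E → V) : (E → ZMod 2) →ₗ[ZMod 2] (V → ZMod 2) where
  toFun x := fun v => ∑ e : E, ((if src e = v then x e else 0) + (if tgt e = v then x e else 0))
  map_add' x y := by
    funext v
    simp only [Pi.add_apply]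
    rw [← Finset.sum_add_distrib]
    refine Finset.sum_congr rfl fun e _ => ?_
    split_ifs <;> ring
  map_smul' c x := by
    funext v
    simp only [RingHom.id_apply, Pi.smul_apply, smul_eq_mul]
    rw [Finset.mul_sum]
    refine Finset.sum_congr rfl fun e _ => ?_
    split_ifs <;> ring

lemma ker_bdry_finrank (src tgt : E → V) (hconn : GraphConnected src tgt) (v0 : V) (r : ℕ)
    (hrank : Fintype.card E + 1 = Fintype.card V + r) :
    Module.finrank (ZMod 2) (LinearMap.ker (bdry src tgt)) ≤ r := by
  classical
  haveI : Fact (Nat.Prime 2) := ⟨Nat.prime_two⟩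
  set ψ : (V → ZMod 2) →ₗ[ZMod 2] ZMod 2 :=
    { toFun := fun y => ∑ v : V, y v
      map_add' := fun x y => by simp [Finset.sum_add_distrib]
      map_smul' := fun c x => by simp [Finset.mul_sum] } with hψ_def
  have hchar : ∀ x : ZMod 2, x + x = 0 := fun x => CharTwo.add_self_eq_zero x
  have hrange : LinearMap.range (bdry src tgt) = LinearMap.ker ψ := by
    apply le_antisymm
    · rintro y ⟨x, rfl⟩
      simp only [LinearMap.mem_ker, hψ_def, LinearMap.coe_mk, AddHom.coe_mk]
      show ∑ v : V, (∑ e : E, ((if src e = v then x e else 0) + (if tgt e = v then x e else 0))) = 0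
      rw [Finset.sum_comm]
      refine Finset.sum_eq_zero fun e _ => ?_
      rw [Finset.sum_add_distrib, Finset.sum_ite_eq, Finset.sum_ite_eq]
      simp only [Finset.mem_univ, if_pos]
      exact hchar (x e)
    · intro y hy
      have hy' : ∑ v : V, y v = 0 := hy
      set d : V → (V → ZMod 2) := fun a v => if v = a then 1 else 0 with hd_def
      have hedge : ∀ e : E, d (src e) + d (tgt e) ∈ LinearMap.range (bdry src tgt) := by
        intro e
        refine ⟨fun e' => if e' = e then 1 else 0, ?_⟩
        funext u
        show ∑ e' : E, ((if src e' = u then (if e' = e then (1:ZMod 2) else 0) else 0)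
          + (if tgt e' = u then (if e' = e then (1:ZMod 2) else 0) else 0)) = _
        rw [Finset.sum_eq_single e]
        · simp only [if_pos rfl, hd_def, Pi.add_apply]
          congr 1 <;> simp [eq_comm]
        · intro b _ hb
          simp [hb]
        · intro h; exact absurd (Finset.mem_univ e) h
      have hkey : ∀ a b : V, Reach src tgt Set.univ a b →
          d a + d b ∈ LinearMap.range (bdry src tgt) := by
        intro a b hr
        induction hr with
        | refl =>
          have : d a + d a = 0 := by
            funext u; exact hchar (d a u)
          rw [this]
          exact Submodule.zero_mem _
        | tail _ hstep ih =>
          rename_i b' c' _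
          obtain ⟨e, -, hOr⟩ := hstep
          have hmem := hedge e
          have hsum := Submodule.add_mem _ ih hmem
          have heq : (d a + d b') + (d (src e) + d (tgt e)) = d a + d c' := by
            rcases hOr with ⟨h1, h2⟩|⟨h1, h2⟩
            · rw [h1, h2]
              funext u
              simp only [Pi.add_apply]
              have := hchar (d b' u)
              linear_combination this
            · rw [h1, h2]
              funext u
              simp only [Pi.add_apply]
              have := hchar (d b' u)
              linear_combination this
          rwa [heq] at hsum
      have hy_eq : y = ∑ v : V, y v • (d v + d v0) := by
        funext u
        rw [Finset.sum_apply]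
        have hterm : ∀ v : V, (y v • (d v + d v0)) u
            = y v * (if u = v then 1 else 0) + y v * (if u = v0 then 1 else 0) := by
          intro v
          simp [hd_def, Pi.add_apply, mul_add]
        rw [Finset.sum_congr rfl fun v _ => hterm v, Finset.sum_add_distrib]
        have h1 : ∑ v : V, y v * (if u = v then 1 else 0) = y u := by
          rw [Finset.sum_congr rfl (fun v _ => by rw [mul_ite, mul_one, mul_zero])]
          rw [Finset.sum_ite_eq]
          simp
        have h2 : ∑ v : V, y v * (if u = v0 then 1 else 0) = 0 := by
          by_cases h : u = v0
          · simp only [if_pos h, mul_one]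
            exact hy'
          · simp [if_neg h]
        rw [h1, h2, add_zero]
      rw [hy_eq]
      refine Submodule.sum_mem _ fun v _ => Submodule.smul_mem _ _ ?_
      exact hkey v v0 (hconn v v0)
  have hψsurj : Function.Surjective ψ := by
    intro c
    refine ⟨fun v => if v = v0 then c else 0, ?_⟩
    show ∑ v : V, (if v = v0 then c else 0) = c
    rw [Finset.sum_ite_eq']
    simp
  have h1 := LinearMap.finrank_range_add_finrank_ker ψ
  have h2 := LinearMap.finrank_range_add_finrank_ker (bdry src tgt)
  rw [LinearMap.range_eq_top.2 hψsurj, finrank_top, Module.finrank_self,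
    Module.finrank_pi] at h1
  rw [hrange, Module.finrank_pi] at h2
  omega

lemma zmod2_ne_zero_eq_one : ∀ a : ZMod 2, a ≠ 0 → a = 1 := by decide

end LinAlg


/-- An elementary circulation on a connected graph with cycle rank `r` has
`L∞` norm at most `r`. -/
theorem elementary_linfty_le_rank {V E : Type} [Fintype V] [Fintype E] [DecidableEq V] [DecidableEq E]
    (src tgt : E → V) (r : ℕ)
    (hconn : GraphConnected src tgt)
    (hrank : Fintype.card E + 1 = Fintype.card V + r)
    (f : E → ℤ) (hf : IsCirculation src tgt f)
    (helem : IsElementary src tgt f) :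
    ∀ e, |f e| ≤ (r : ℤ) := by
  classical
  haveI : Fact (Nat.Prime 2) := ⟨Nat.prime_two⟩
  intro e0
  by_contra hcon
  push_neg at hcon
  have hm : ((r+1 : ℕ) : ℤ) ≤ |f e0| := by push_cast; omega
  obtain ⟨Cs, hCs1, hCs2, hCs3, hCs4⟩ := exists_family src tgt e0 (r+1) f hf hm
  have hker : ∀ i : Fin (r+1), (fun e => ((Cs i e : ℤ) : ZMod 2)) ∈ LinearMap.ker (bdry src tgt) := by
    intro i
    rw [LinearMap.mem_ker]
    funext u
    show ∑ e : E, ((if src e = u then ((Cs i e : ℤ) : ZMod 2) else 0)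
      + (if tgt e = u then ((Cs i e : ℤ) : ZMod 2) else 0)) = 0
    rw [Finset.sum_add_distrib]
    have hcast : ∀ (p : E → V), ∑ e : E, (if p e = u then ((Cs i e : ℤ) : ZMod 2) else 0)
        = (((∑ e : E, if p e = u then Cs i e else 0) : ℤ) : ZMod 2) := by
      intro p
      rw [Int.cast_sum]
      refine Finset.sum_congr rfl fun e _ => ?_
      split_ifs <;> simp
    rw [hcast src, hcast tgt, (hCs1 i).1.1 u]
    exact CharTwo.add_self_eq_zero _
  have hrk := ker_bdry_finrank src tgt hconn (src e0) r hrank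
  have hnotli : ¬ LinearIndependent (ZMod 2)
      (fun i : Fin (r+1) => (⟨_, hker i⟩ : LinearMap.ker (bdry src tgt))) := by
    intro hli
    have hle := hli.fintype_card_le_finrank
    rw [Fintype.card_fin] at hle
    omega
  obtain ⟨c, hc0, i0, hi0⟩ := Fintype.not_linearIndependent_iff.1 hnotli
  have hc0' : ∀ e : E, ∑ i : Fin (r+1), c i * ((Cs i e : ℤ) : ZMod 2) = 0 := by
    intro e
    have h1 := congrArg (fun z : LinearMap.ker (bdry src tgt) => (z : E → ZMod 2) e) hc0
    simpa [Finset.sum_apply] using h1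
  set I : Finset (Fin (r+1)) := Finset.univ.filter (fun i => c i ≠ 0) with hI_def
  have hIsum : ∀ e : E, ∑ i ∈ I, ((Cs i e : ℤ) : ZMod 2) = 0 := by
    intro e
    have h2 : ∑ i ∈ I, c i * ((Cs i e : ℤ) : ZMod 2) = 0 := by
      refine (Finset.sum_subset (Finset.subset_univ I) (fun x _ hx => ?_)).trans (hc0' e)
      have hcx : c x = 0 := by
        by_contra hne
        exact hx (Finset.mem_filter.2 ⟨Finset.mem_univ _, hne⟩)
      rw [hcx, zero_mul]
    calc ∑ i ∈ I, ((Cs i e : ℤ) : ZMod 2)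
        = ∑ i ∈ I, c i * ((Cs i e : ℤ) : ZMod 2) := by
          refine Finset.sum_congr rfl fun i hi => ?_
          rw [zmod2_ne_zero_eq_one (c i) (Finset.mem_filter.1 hi).2, one_mul]
      _ = 0 := h2
  set D : E → ℤ := fun e => ∑ i ∈ I, Cs i e with hD_def
  have hDeven : ∀ e, (2:ℤ) ∣ D e := by
    intro e
    have hz : ((D e : ℤ) : ZMod 2) = 0 := by
      simp only [hD_def]
      rw [Int.cast_sum]
      exact hIsum e
    exact (ZMod.intCast_zmod_eq_zero_iff_dvd _ 2).1 hz
  have hDcirc : IsCirculation src tgt D := by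
    intro u
    have hsw : ∀ (p : E → V), ∑ e : E, (if p e = u then D e else 0)
        = ∑ i ∈ I, ∑ e : E, (if p e = u then Cs i e else 0) := by
      intro p
      have h1 : ∀ e : E, (if p e = u then D e else 0) = ∑ i ∈ I, (if p e = u then Cs i e else 0) := by
        intro e
        simp only [hD_def]
        split_ifs with h
        · rfl
        · exact Finset.sum_const_zero.symm
      rw [Finset.sum_congr rfl fun e _ => h1 e, Finset.sum_comm]
    rw [hsw src, hsw tgt]
    exact Finset.sum_congr rfl fun i _ => (hCs1 i).1.1 u
  have hDle : ∀ e, |D e| ≤ |f e| := by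
    intro e
    have h1 : |D e| ≤ ∑ i ∈ I, |Cs i e| := Finset.abs_sum_le_sum_abs _ _
    have h2 : ∑ i ∈ I, |Cs i e| ≤ ∑ i : Fin (r+1), |Cs i e| :=
      Finset.sum_le_sum_of_subset_of_nonneg (Finset.subset_univ I) (fun i _ _ => abs_nonneg _)
    exact le_trans h1 (le_trans h2 (hCs3 e))
  have hDsign : ∀ e, D e ≠ 0 → 0 < D e * f e := by
    intro e hD
    have hfe : f e ≠ 0 := by
      intro hf0
      apply hD
      simp only [hD_def]
      refine Finset.sum_eq_zero fun i _ => ?_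
      by_contra hne
      have hx := hCs2 i e hne
      rw [hf0, mul_zero] at hx
      exact lt_irrefl 0 hx
    have hterm : ∀ i ∈ I, 0 ≤ Cs i e * f e := by
      intro i _
      rcases eq_or_ne (Cs i e) 0 with h|h
      · rw [h, zero_mul]
      · exact le_of_lt (hCs2 i e h)
    have hge : 0 ≤ D e * f e := by
      simp only [hD_def]
      rw [Finset.sum_mul]
      exact Finset.sum_nonneg hterm
    rcases lt_or_eq_of_le hge with h|h
    · exact h
    · exact absurd h.symm (mul_ne_zero hD hfe)
  have hInonempty : I.Nonempty := ⟨i0, Finset.mem_filter.2 ⟨Finset.mem_univ _, hi0⟩⟩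
  have hDe0 : D e0 ≠ 0 := by
    have hpos : 0 < D e0 * f e0 := by
      simp only [hD_def]
      rw [Finset.sum_mul]
      exact Finset.sum_pos (fun i _ => hCs2 i e0 (hCs4 i)) hInonempty
    intro h
    rw [h, zero_mul] at hpos
    exact lt_irrefl 0 hpos
  set D' : E → ℤ := fun e => D e / 2 with hD'_def
  have hD2 : ∀ e, D e = 2 * D' e := fun e => (Int.mul_ediv_cancel' (hDeven e)).symm
  have hD'circ : IsCirculation src tgt D' := by
    intro u
    have key : ∀ (p : E → V), 2 * ∑ e : E, (if p e = u then D' e else 0)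
        = ∑ e : E, (if p e = u then D e else 0) := by
      intro p
      rw [Finset.mul_sum]
      refine Finset.sum_congr rfl fun e _ => ?_
      rw [hD2 e]
      split_ifs <;> ring
    have hcu := hDcirc u
    rw [← key src, ← key tgt] at hcu
    exact mul_left_cancel₀ (two_ne_zero) hcu
  have hD'e0 : D' e0 ≠ 0 := by
    intro h
    apply hDe0
    rw [hD2 e0, h, mul_zero]
  obtain ⟨Cf, hCfu, hCfc, -⟩ := exists_unit_cycle_through src tgt
    (∑ e : E, (D' e).natAbs) D' le_rfl hD'circ e0 hD'e0
  apply helem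
  refine ⟨Cf, hCfu, ?_⟩
  intro e
  dsimp only
  constructor
  · have h1 := (hCfc e).1
    have h2 : |2 * Cf e| = 2 * |Cf e| := by rw [abs_mul, abs_two]
    have h3 : |D e| = 2 * |D' e| := by rw [hD2 e, abs_mul, abs_two]
    have h4 := hDle e
    omega
  · intro h2ne
    have hCfe : Cf e ≠ 0 := by
      intro h
      rw [h, mul_zero] at h2ne
      exact h2ne rfl
    have hp1 : 0 < Cf e * D' e := (hCfc e).2 hCfe
    have hD'ne : D' e ≠ 0 := by
      intro hz
      rw [hz, mul_zero] at hp1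
      exact lt_irrefl 0 hp1
    have hDne : D e ≠ 0 := by
      have := hD2 e
      intro hz
      apply hD'ne
      omega
    have hp2 : 0 < D e * f e := hDsign e hDne
    rw [hD2 e] at hp2
    have hp3 : 0 < D' e * f e := by nlinarith
    have hp4 := sign_trans hp1 hp3
    have : 2 * Cf e * f e = 2 * (Cf e * f e) := by ring
    rw [this]
    linarith
end

section
/- The bound in the previous proposition is tight: for every r >= 1, there exists a connected undirected graph with cycle rank r and an elementary circulation f on it such that |f(e)| = r for some edge e. -/
open Finset

/-- The bound `‖f‖∞ ≤ r` for elementary circulations is tight: for every `r ≥ 1`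
there is a connected graph with cycle rank `r` and an elementary circulation
attaining value `r` on some edge. -/
theorem elementary_linfty_tight :
    ∀ r : ℕ, 1 ≤ r →
      ∃ (n m : ℕ) (src tgt : Fin m → Fin n) (f : Fin m → ℤ),
        GraphConnected src tgt ∧
        m + 1 = n + r ∧
        IsCirculation src tgt f ∧
        IsElementary src tgt f ∧
        ∃ e : Fin m, |f e| = (r : ℤ) := by
  intro r hr
  refine ⟨2, r + 1, fun _ => 0, fun _ => 1,
    fun e => if e = 0 then (r : ℤ) else -1, ?_, by ring, ?_, ?_, ⟨0, by
      simp⟩⟩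
  · -- connected
    intro a b
    fin_cases a <;> fin_cases b
    · exact Relation.ReflTransGen.refl
    · exact Relation.ReflTransGen.single ⟨0, Set.mem_univ _, Or.inl ⟨rfl, rfl⟩⟩
    · exact Relation.ReflTransGen.single ⟨0, Set.mem_univ _, Or.inr ⟨rfl, rfl⟩⟩
    · exact Relation.ReflTransGen.refl
  · -- circulation
    have hsum : ∑ e : Fin (r + 1), (if e = 0 then (r : ℤ) else -1) = 0 := by
      rw [Fin.sum_univ_succ]
      simp [Fin.succ_ne_zero]
    intro v
    fin_cases v <;> simp_all
  · -- elementary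
    rintro ⟨C, ⟨⟨hcirc, ⟨e0, he0⟩, hconn, hdeg⟩, hunit⟩, hcont⟩
    have hzero : ∀ e : Fin (r + 1), e ≠ 0 → C e = 0 := by
      intro e he
      have h1 := (hcont e).1
      simp only [if_neg he] at h1
      rcases hunit e with h | h | h
      · exact h
      · rw [h] at h1; norm_num at h1
      · rw [h] at h1; norm_num at h1
    have he0' : e0 = 0 := by by_contra h; exact he0 (hzero e0 h)
    have hiff : ∀ e : Fin (r + 1), C e ≠ 0 ↔ e = 0 := fun e =>
      ⟨fun h => by by_contra hne; exact h (hzero e hne), fun h => h ▸ he0' ▸ he0⟩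
    have htouch : Touches (fun _ : Fin (r+1) => (0 : Fin 2)) (fun _ => 1) {e | C e ≠ 0} 0 :=
      ⟨e0, he0, Or.inl rfl⟩
    have h2 := hdeg 0 htouch
    simp [suppDegree, hiff, Finset.filter_eq'] at h2
end

section
/- If f is a nonzero non-negative integral circulation on a finite undirected graph, then the support of f contains a cycle; consequently there exists a non-negative unit cycle flow C with supp(C) contained in supp(f). -/
open Finset

set_option maxHeartbeats 1000000

section Aux
variable {V E : Type}

lemma edgeAdj_symm (src tgt : E → V) (S : Set E) : Symmetric (EdgeAdj src tgt S) := by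
  rintro a b ⟨e, he, h⟩
  exact ⟨e, he, h.symm⟩

lemma reach_symm (src tgt : E → V) (S : Set E) : Symmetric (Reach src tgt S) :=
  have : Std.Symm (EdgeAdj src tgt S) := ⟨fun _ _ h => edgeAdj_symm src tgt S h⟩
  fun a b h => Std.Symm.symm (r := Relation.ReflTransGen (EdgeAdj src tgt S)) a b h

end Aux
/-- The support of a nonzero non-negative circulation contains a cycle: there is a
non-negative unit cycle flow supported inside `supp f`. -/
theorem nonneg_circulation_contains_cycle {V E : Type} [Fintype V] [Fintype E]
    [DecidableEq V] [DecidableEq E]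
    (src tgt : E → V)
    (f : E → ℤ) (hf : IsCirculation src tgt f)
    (hnonneg : ∀ e, 0 ≤ f e) (hne : f ≠ 0) :
    ∃ C : E → ℤ, IsUnitCycleFlow src tgt C ∧ (∀ e, 0 ≤ C e) ∧
      ∀ e, C e ≠ 0 → f e ≠ 0 := by
  classical
  -- Step: every edge in the support has a successor in the support
  have key : ∀ e : E, f e ≠ 0 → ∃ e', f e' ≠ 0 ∧ src e' = tgt e := by
    intro e he
    by_contra h
    push_neg at h
    have h0 := hf (tgt e)
    have hlhs : 0 < ∑ e' : E, (if tgt e' = tgt e then f e' else 0) := by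
      apply Finset.sum_pos'
      · intro i _; split <;> simp [hnonneg i]
      · exact ⟨e, mem_univ e, by simp [lt_of_le_of_ne (hnonneg e) (Ne.symm he)]⟩
    have hrhs : ∑ e' : E, (if src e' = tgt e then f e' else 0) = 0 := by
      apply Finset.sum_eq_zero
      intro i _
      split
      · by_contra hfi; exact h i hfi ‹_›
      · rfl
    rw [h0, hrhs] at hlhs
    exact lt_irrefl 0 hlhs
  obtain ⟨e0, he0⟩ : ∃ e, f e ≠ 0 := by
    by_contra h; push_neg at h; exact hne (funext h)
  -- build the infinite walk
  choose g hg1 hg2 using fun (p : {e : E // f e ≠ 0}) => key p.1 p.2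
  set G : {e : E // f e ≠ 0} → {e : E // f e ≠ 0} := fun p => ⟨g p, hg1 p⟩ with hG
  set x : ℕ → {e : E // f e ≠ 0} := fun n => G^[n] ⟨e0, he0⟩ with hx
  set v : ℕ → V := fun n => src (x n).1 with hv
  have hstep : ∀ n, tgt (x n).1 = v (n + 1) := by
    intro n
    have h1 : x (n + 1) = G (x n) := Function.iterate_succ_apply' G n _
    have : v (n + 1) = src (G (x n)).1 := by rw [hv]; simp only [h1]
    rw [this]
    exact (hg2 (x n)).symm
  -- pigeonhole: some vertex repeats
  have hP : ∃ n, ∃ m, m < n ∧ v m = v n := by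
    obtain ⟨i, j, hij, hvij⟩ := Finite.exists_ne_map_eq_of_infinite v
    rcases lt_or_gt_of_ne hij with h | h
    · exact ⟨j, i, h, hvij⟩
    · exact ⟨i, j, h, hvij.symm⟩
  set n := Nat.find hP with hn
  obtain ⟨m, hmn, hvmn⟩ := Nat.find_spec hP
  have hmin : ∀ n' < n, ¬ ∃ m', m' < n' ∧ v m' = v n' := fun n' h => Nat.find_min hP h
  set k := n - m with hk
  have hk0 : 0 < k := Nat.sub_pos_of_lt hmn
  set w : ℕ → V := fun i => v (m + i) with hw
  set ce : ℕ → E := fun i => (x (m + i)).1 with hce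
  have hcesrc : ∀ i, src (ce i) = w i := fun i => rfl
  have hcef : ∀ i, f (ce i) ≠ 0 := fun i => (x (m + i)).2
  have hwk : w k = w 0 := by
    simp only [hw]
    rw [Nat.add_sub_cancel' (le_of_lt hmn), Nat.add_zero]
    exact hvmn.symm
  have hcetgt : ∀ i < k, tgt (ce i) = w ((i + 1) % k) := by
    intro i hi
    have h1 : tgt (ce i) = v (m + i + 1) := hstep (m + i)
    rcases Nat.lt_or_ge (i + 1) k with h | h
    · rw [Nat.mod_eq_of_lt h, h1]; simp only [hw]; ring_nf
    · have hik : i + 1 = k := le_antisymm (by omega) h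
      rw [hik, Nat.mod_self, h1]
      have : m + i + 1 = n := by omega
      rw [this]
      simp only [hw, Nat.add_zero]
      exact hvmn.symm
  -- injectivity of w on [0, k)
  have winj : ∀ i < k, ∀ j < k, w i = w j → i = j := by
    intro i hi j hj hweq
    by_contra hne'
    rcases lt_or_gt_of_ne hne' with h | h
    · exact hmin (m + j) (by omega) ⟨m + i, by omega, hweq⟩
    · exact hmin (m + i) (by omega) ⟨m + j, by omega, hweq.symm⟩
  have hceinj : ∀ i < k, ∀ j < k, ce i = ce j → i = j := by
    intro i hi j hj hceeq
    apply winj i hi j hj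
    rw [← hcesrc, ← hcesrc, hceeq]
  -- the cycle flow
  set F : Finset E := (Finset.range k).image ce with hF
  set C : E → ℤ := fun e => if e ∈ F then 1 else 0 with hC
  have hCmem : ∀ e, C e ≠ 0 ↔ e ∈ F := by
    intro e; simp only [hC]; split_ifs with h <;> simp [h]
  -- counting lemmas
  have hinjOn : ∀ (p : ℕ → Prop) [DecidablePred p],
      Set.InjOn ce ((range k).filter p) := by
    intro p _ i hi j hj hceeq
    simp only [coe_filter, Set.mem_setOf_eq, mem_range] at hi hj
    exact hceinj i hi.1 j hj.1 hceeq
  have hsrc_count : ∀ u : V, (F.filter fun e => src e = u).card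
      = ((range k).filter fun i => w i = u).card := by
    intro u
    rw [hF, Finset.filter_image, Finset.card_image_of_injOn (hinjOn _)]
  have modinj : ∀ i < k, ∀ j < k, (i + 1) % k = (j + 1) % k → i = j := by
    intro i hi j hj hmod
    have h1 : (i + 1) % k = if i + 1 = k then 0 else i + 1 := by
      split_ifs with h
      · rw [h, Nat.mod_self]
      · exact Nat.mod_eq_of_lt (by omega)
    have h2 : (j + 1) % k = if j + 1 = k then 0 else j + 1 := by
      split_ifs with h
      · rw [h, Nat.mod_self]
      · exact Nat.mod_eq_of_lt (by omega)
    rw [h1, h2] at hmod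
    split_ifs at hmod <;> omega
  have htgt_count : ∀ u : V, (F.filter fun e => tgt e = u).card
      = ((range k).filter fun i => w i = u).card := by
    intro u
    rw [hF, Finset.filter_image, Finset.card_image_of_injOn (hinjOn _)]
    apply Finset.card_bij (fun i _ => (i + 1) % k)
    · intro i hi
      simp only [mem_filter, mem_range] at hi ⊢
      exact ⟨Nat.mod_lt _ hk0, by rw [← hcetgt i hi.1]; exact hi.2⟩
    · intro i hi j hj heq
      simp only [mem_filter, mem_range] at hi hj
      exact modinj i hi.1 j hj.1 heq
    · intro j hj
      simp only [mem_filter, mem_range] at hj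
      refine ⟨if j = 0 then k - 1 else j - 1, ?_, ?_⟩
      · have hi1 : (if j = 0 then k - 1 else j - 1) + 1 = if j = 0 then k else j := by
          split <;> omega
        have hmod : ((if j = 0 then k - 1 else j - 1) + 1) % k = j := by
          rw [hi1]; split_ifs with h
          · rw [Nat.mod_self]; omega
          · exact Nat.mod_eq_of_lt (by omega)
        simp only [mem_filter, mem_range]
        constructor
        · split <;> omega
        · rw [hcetgt _ (by split <;> omega), hmod]; exact hj.2
      · have hi1 : (if j = 0 then k - 1 else j - 1) + 1 = if j = 0 then k else j := by
          split <;> omega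
        rw [hi1]; split_ifs with h
        · rw [Nat.mod_self]; omega
        · exact Nat.mod_eq_of_lt (by omega)
  have hsum : ∀ (h : E → V) (u : V), (∑ e : E, if h e = u then C e else 0)
      = ((F.filter fun e => h e = u).card : ℤ) := by
    intro h u
    have hterm : ∀ e : E, (if h e = u then C e else 0)
        = (if e ∈ F ∧ h e = u then (1 : ℤ) else 0) := by
      intro e
      by_cases h1 : h e = u <;> by_cases h2 : e ∈ F <;> simp [hC, h1, h2]
    rw [Finset.sum_congr rfl fun e _ => hterm e, Finset.sum_boole]
    congr 2
    ext e
    simp [and_comm]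
  have hcirc : IsCirculation src tgt C := by
    intro u
    rw [hsum tgt u, hsum src u, htgt_count u, hsrc_count u]
  have htouch : ∀ u : V, Touches src tgt {e | C e ≠ 0} u → ∃ j < k, w j = u := by
    rintro u ⟨e, he, hor⟩
    rw [Set.mem_setOf_eq, hCmem, hF] at he
    simp only [mem_image, mem_range] at he
    obtain ⟨i, hik, rfl⟩ := he
    rcases hor with h | h
    · exact ⟨i, hik, by rw [← hcesrc i, h]⟩
    · exact ⟨(i + 1) % k, Nat.mod_lt _ hk0, by rw [← hcetgt i hik, h]⟩
  have hW1 : ∀ u : V, (∃ j < k, w j = u) →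
      ((range k).filter fun i => w i = u).card = 1 := by
    rintro u ⟨j, hj, rfl⟩
    rw [Finset.card_eq_one]
    refine ⟨j, ?_⟩
    ext i
    simp only [mem_filter, mem_range, mem_singleton]
    constructor
    · rintro ⟨hik, hwi⟩; exact winj i hik j hj hwi
    · rintro rfl; exact ⟨hj, rfl⟩
  have hdeg : ∀ u : V, Touches src tgt {e | C e ≠ 0} u → suppDegree src tgt C u = 2 := by
    intro u hu
    have hj := htouch u hu
    have e1 : (univ.filter fun e => C e ≠ 0 ∧ src e = u) = F.filter fun e => src e = u := by
      ext e; simp [hCmem e]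
    have e2 : (univ.filter fun e => C e ≠ 0 ∧ tgt e = u) = F.filter fun e => tgt e = u := by
      ext e; simp [hCmem e]
    unfold suppDegree
    rw [e1, e2, hsrc_count, htgt_count, hW1 u hj]
  have hedge : ∀ i < k, EdgeAdj src tgt {e | C e ≠ 0} (w i) (w ((i + 1) % k)) := by
    intro i hi
    refine ⟨ce i, ?_, Or.inl ⟨hcesrc i, hcetgt i hi⟩⟩
    rw [Set.mem_setOf_eq, hCmem, hF]
    exact mem_image_of_mem ce (mem_range.mpr hi)
  have hreach0 : ∀ j, j < k → Reach src tgt {e | C e ≠ 0} (w 0) (w j) := by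
    intro j
    induction j with
    | zero => intro _; exact Relation.ReflTransGen.refl
    | succ i ih =>
      intro hj
      have hik : i < k := by omega
      have hE := hedge i hik
      rw [Nat.mod_eq_of_lt hj] at hE
      exact Relation.ReflTransGen.tail (ih hik) hE
  have hconn : ConnectedOn src tgt {e | C e ≠ 0} := by
    intro a b ha hb
    obtain ⟨i, hik, rfl⟩ := htouch a ha
    obtain ⟨j, hjk, rfl⟩ := htouch b hb
    exact Relation.ReflTransGen.trans (reach_symm _ _ _ (hreach0 i hik)) (hreach0 j hjk)
  refine ⟨C, ⟨⟨hcirc, ⟨ce 0, ?_⟩, hconn, hdeg⟩, ?_⟩, ?_, ?_⟩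
  · rw [hCmem, hF]
    exact mem_image_of_mem ce (mem_range.mpr hk0)
  · intro e
    simp only [hC]
    split_ifs <;> simp
  · intro e
    simp only [hC]
    split_ifs <;> simp
  · intro e heC
    rw [hCmem, hF] at heC
    simp only [mem_image, mem_range] at heC
    obtain ⟨i, _, rfl⟩ := heC
    exact hcef i
end

section
/- Let f be a non-negative integral circulation on a finite connected graph G with cycle rank r. Suppose every unit cycle flow contained in f appears with multiplicity one (f is elementary). Then f is the sum of at most r distinct non-negative unit cycle flows. -/
open Finset

section Extract
variable {V E : Type} [Fintype V] [Fintype E] [DecidableEq V] [DecidableEq E]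
  (src tgt : E → V)

lemma exists_next (f : E → ℤ) (hf : IsCirculation src tgt f) (hnn : ∀ e, 0 ≤ f e)
    (e : E) (he : 0 < f e) : ∃ e', src e' = tgt e ∧ 0 < f e' := by
  by_contra hcon
  push_neg at hcon
  have h := hf (tgt e)
  have h1 : 0 < ∑ e' : E, (if tgt e' = tgt e then f e' else 0) := by
    apply Finset.sum_pos' (fun e' _ => by split <;> [exact hnn e'; exact le_refl 0])
    exact ⟨e, mem_univ e, by simp [he]⟩
  have h2 : ∑ e' : E, (if src e' = tgt e then f e' else 0) ≤ 0 := by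
    apply Finset.sum_nonpos
    intro e' _
    split
    · next hs => exact hcon e' hs
    · exact le_refl 0
  omega

noncomputable def walk (f : E → ℤ) (hf : IsCirculation src tgt f) (hnn : ∀ e, 0 ≤ f e)
    (e0 : E) (he0 : 0 < f e0) : ℕ → {e : E // 0 < f e}
  | 0 => ⟨e0, he0⟩
  | n+1 =>
    ⟨(exists_next src tgt f hf hnn (walk f hf hnn e0 he0 n).1 (walk f hf hnn e0 he0 n).2).choose,
     (exists_next src tgt f hf hnn (walk f hf hnn e0 he0 n).1 (walk f hf hnn e0 he0 n).2).choose_spec.2⟩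

lemma walk_src (f : E → ℤ) (hf : IsCirculation src tgt f) (hnn : ∀ e, 0 ≤ f e)
    (e0 : E) (he0 : 0 < f e0) (n : ℕ) :
    src (walk src tgt f hf hnn e0 he0 (n+1)).1 = tgt (walk src tgt f hf hnn e0 he0 n).1 :=
  (exists_next src tgt f hf hnn (walk src tgt f hf hnn e0 he0 n).1
    (walk src tgt f hf hnn e0 he0 n).2).choose_spec.1

set_option linter.unusedSectionVars false in
lemma extract_cycle (f : E → ℤ) (hf : IsCirculation src tgt f) (hnn : ∀ e, 0 ≤ f e)
    (e0 : E) (he0 : 0 < f e0) :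
    ∃ C : E → ℤ, IsUnitCycleFlow src tgt C ∧ (∀ e, 0 ≤ C e) ∧ (∀ e, C e ≤ f e) := by
  classical
  set w : ℕ → E := fun n => (walk src tgt f hf hnn e0 he0 n).1 with hw
  have hwpos : ∀ n, 0 < f (w n) := fun n => (walk src tgt f hf hnn e0 he0 n).2
  set vtx : ℕ → V := fun n => src (w n) with hv
  have hstep : ∀ n, tgt (w n) = vtx (n+1) := fun n => (walk_src src tgt f hf hnn e0 he0 n).symm
  -- find first vertex repetition
  have hP : ∃ j, ∃ i, i < j ∧ vtx i = vtx j := by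
    obtain ⟨x, y, hxy, hvxy⟩ := Finite.exists_ne_map_eq_of_infinite vtx
    rcases lt_or_gt_of_ne hxy with h | h
    · exact ⟨y, x, h, hvxy⟩
    · exact ⟨x, y, h, hvxy.symm⟩
  set j0 := Nat.find hP with hj0
  obtain ⟨i0, hij, hvij⟩ := Nat.find_spec hP
  have hinj : ∀ k l, k < j0 → l < j0 → vtx k = vtx l → k = l := by
    intro k l hk hl heq
    by_contra hne
    rcases lt_or_gt_of_ne hne with h | h
    · exact Nat.find_min hP hl ⟨k, h, heq⟩
    · exact Nat.find_min hP hk ⟨l, h, heq.symm⟩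
  set Ico : Finset ℕ := Finset.Ico i0 j0 with hIco
  have hi0mem : i0 ∈ Ico := Finset.mem_Ico.2 ⟨le_refl i0, hij⟩
  have hmemIco : ∀ k, k ∈ Ico ↔ i0 ≤ k ∧ k < j0 := fun k => Finset.mem_Ico
  -- the cyclic successor on Ico
  set σ : ℕ → ℕ := fun k => if k + 1 = j0 then i0 else k + 1 with hσ
  set τ : ℕ → ℕ := fun k => if k = i0 then j0 - 1 else k - 1 with hτ
  have hσmem : ∀ k ∈ Ico, σ k ∈ Ico := by
    intro k hk
    rw [hmemIco] at hk ⊢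
    by_cases h : k + 1 = j0 <;> simp only [hσ, h, if_true, if_false] <;> omega
  have hτmem : ∀ k ∈ Ico, τ k ∈ Ico := by
    intro k hk
    rw [hmemIco] at hk ⊢
    by_cases h : k = i0 <;> simp only [hτ, h, if_true, if_false] <;> omega
  have hτσ : ∀ k ∈ Ico, τ (σ k) = k := by
    intro k hk
    rw [hmemIco] at hk
    simp only [hσ, hτ]
    split <;> split <;> omega
  have hστ : ∀ k ∈ Ico, σ (τ k) = k := by
    intro k hk
    rw [hmemIco] at hk
    simp only [hσ, hτ]
    split <;> split <;> omega
  have htgtσ : ∀ k, tgt (w k) = vtx (σ k) := by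
    intro k
    rw [hstep k]
    simp only [hσ]
    split
    · next h => rw [h]; exact hvij.symm
    · rfl
  -- edges of the cycle
  set F : Finset E := Ico.image w with hF
  have winj : ∀ k ∈ Ico, ∀ l ∈ Ico, w k = w l → k = l := by
    intro k hk l hl he
    rw [hmemIco] at hk hl
    exact hinj k l hk.2 hl.2 (by rw [hv]; simp only; rw [he])
  set C : E → ℤ := fun e => if e ∈ F then 1 else 0 with hC
  have hC01 : ∀ e, C e = 0 ∨ C e = 1 := by
    intro e; by_cases h : e ∈ F <;> simp [hC, h]
  have hCne : ∀ e, C e ≠ 0 ↔ e ∈ F := by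
    intro e; by_cases h : e ∈ F <;> simp [hC, h]
  -- the two filter-card computations
  have hfiltS : ∀ u : V, (univ.filter fun e => C e ≠ 0 ∧ src e = u)
      = (Ico.filter fun k => vtx k = u).image w := by
    intro u
    ext e
    simp only [Finset.mem_filter, Finset.mem_univ, true_and, Finset.mem_image, hCne, hF]
    constructor
    · rintro ⟨⟨k, hk, rfl⟩, hsrc⟩
      exact ⟨k, ⟨hk, hsrc⟩, rfl⟩
    · rintro ⟨k, ⟨hk, hvk⟩, rfl⟩
      exact ⟨⟨k, hk, rfl⟩, hvk⟩
  have hfiltT : ∀ u : V, (univ.filter fun e => C e ≠ 0 ∧ tgt e = u)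
      = (Ico.filter fun k => vtx (σ k) = u).image w := by
    intro u
    ext e
    simp only [Finset.mem_filter, Finset.mem_univ, true_and, Finset.mem_image, hCne, hF]
    constructor
    · rintro ⟨⟨k, hk, rfl⟩, htgt⟩
      exact ⟨k, ⟨hk, by rw [← htgtσ k]; exact htgt⟩, rfl⟩
    · rintro ⟨k, ⟨hk, hvk⟩, rfl⟩
      exact ⟨⟨k, hk, rfl⟩, by rw [htgtσ k]; exact hvk⟩
  have hcardσ : ∀ u : V, (Ico.filter fun k => vtx (σ k) = u).card
      = (Ico.filter fun k => vtx k = u).card := by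
    intro u
    apply Finset.card_bij' (fun k _ => σ k) (fun k _ => τ k)
    · intro k hk
      have hk' := Finset.mem_filter.1 hk
      exact Finset.mem_filter.2 ⟨hσmem k hk'.1, hk'.2⟩
    · intro k hk
      have hk' := Finset.mem_filter.1 hk
      refine Finset.mem_filter.2 ⟨hτmem k hk'.1, ?_⟩
      rw [hστ k hk'.1]; exact hk'.2
    · intro k hk
      exact hτσ k (Finset.mem_filter.1 hk).1
    · intro k hk
      exact hστ k (Finset.mem_filter.1 hk).1
  have hcardS : ∀ u : V, (univ.filter fun e => C e ≠ 0 ∧ src e = u).card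
      = (Ico.filter fun k => vtx k = u).card := by
    intro u
    rw [hfiltS u]
    exact Finset.card_image_of_injOn (fun k hk l hl =>
      winj k (Finset.mem_filter.1 hk).1 l (Finset.mem_filter.1 hl).1)
  have hcardT : ∀ u : V, (univ.filter fun e => C e ≠ 0 ∧ tgt e = u).card
      = (Ico.filter fun k => vtx k = u).card := by
    intro u
    rw [hfiltT u, Finset.card_image_of_injOn (fun k hk l hl =>
      winj k (Finset.mem_filter.1 hk).1 l (Finset.mem_filter.1 hl).1)]
    exact hcardσ u
  -- sums from cards
  have hsum : ∀ (p : E → V) (u : V), ∑ e : E, (if p e = u then C e else 0)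
      = ((univ.filter fun e => C e ≠ 0 ∧ p e = u).card : ℤ) := by
    intro p u
    rw [← Finset.sum_boole]
    apply Finset.sum_congr rfl
    intro e _
    by_cases hp : p e = u
    · rcases hC01 e with h | h
      · rw [if_pos hp, if_neg (fun hc : C e ≠ 0 ∧ p e = u => hc.1 h), h]
      · rw [if_pos hp, if_pos (⟨by rw [h]; exact one_ne_zero, hp⟩ : C e ≠ 0 ∧ p e = u)]
        exact h
    · rw [if_neg hp, if_neg (fun hc : C e ≠ 0 ∧ p e = u => hp hc.2)]
  -- circulation
  have hcirc : IsCirculation src tgt C := by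
    intro u
    rw [hsum tgt u, hsum src u, hcardS u, hcardT u]
  -- touched vertices
  have htouch : ∀ u : V, Touches src tgt {e | C e ≠ 0} u ↔ ∃ k ∈ Ico, vtx k = u := by
    intro u
    constructor
    · rintro ⟨e, he, h | h⟩
      · obtain ⟨k, hk, rfl⟩ := Finset.mem_image.1 ((hCne e).1 he)
        exact ⟨k, hk, h⟩
      · obtain ⟨k, hk, rfl⟩ := Finset.mem_image.1 ((hCne e).1 he)
        exact ⟨σ k, hσmem k hk, by rw [← htgtσ k]; exact h⟩
    · rintro ⟨k, hk, rfl⟩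
      exact ⟨w k, (hCne (w k)).2 (Finset.mem_image_of_mem w hk), Or.inl rfl⟩
  have hcard1 : ∀ u : V, (∃ k ∈ Ico, vtx k = u) → (Ico.filter fun k => vtx k = u).card = 1 := by
    rintro u ⟨k0, hk0, rfl⟩
    rw [Finset.card_eq_one]
    refine ⟨k0, ?_⟩
    ext k
    simp only [Finset.mem_filter, Finset.mem_singleton]
    constructor
    · rintro ⟨hk, heq⟩
      exact hinj k k0 ((hmemIco k).1 hk).2 ((hmemIco k0).1 hk0).2 heq
    · rintro rfl
      exact ⟨hk0, rfl⟩
  -- reachability along the cycle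
  have hreach : ∀ k, i0 ≤ k → k < j0 → Reach src tgt {e | C e ≠ 0} (vtx i0) (vtx k) := by
    intro k hk
    induction k, hk using Nat.le_induction with
    | base => intro _; exact Relation.ReflTransGen.refl
    | succ k hk ih =>
      intro h
      have hkj : k < j0 := by omega
      have hkmem : k ∈ Ico := (hmemIco k).2 ⟨hk, hkj⟩
      refine Relation.ReflTransGen.tail (ih hkj) ?_
      exact ⟨w k, (hCne (w k)).2 (Finset.mem_image_of_mem w hkmem), Or.inl ⟨rfl, hstep k⟩⟩
  have hsymm : Symmetric (EdgeAdj src tgt {e | C e ≠ 0}) :=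
    fun a b ⟨e, he, h⟩ => ⟨e, he, h.symm⟩
  have hreach' : ∀ a : V, Touches src tgt {e | C e ≠ 0} a →
      Reach src tgt {e | C e ≠ 0} (vtx i0) a := by
    intro a ha
    obtain ⟨k, hk, rfl⟩ := (htouch a).1 ha
    obtain ⟨h1, h2⟩ := (hmemIco k).1 hk
    exact hreach k h1 h2
  refine ⟨C, ⟨⟨hcirc, ⟨w i0, (hCne _).2 (Finset.mem_image_of_mem w hi0mem)⟩, ?_, ?_⟩, ?_⟩, ?_, ?_⟩
  · -- ConnectedOn
    intro a b ha hb
    haveI : Std.Symm (EdgeAdj src tgt {e | C e ≠ 0}) := ⟨fun a b h => hsymm h⟩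
    exact Relation.ReflTransGen.trans
      (Std.Symm.symm (r := Relation.ReflTransGen (EdgeAdj src tgt {e | C e ≠ 0})) _ _ (hreach' a ha)) (hreach' b hb)
  · -- degree 2
    intro u hu
    obtain ⟨k, hk, rfl⟩ := (htouch u).1 hu
    show (univ.filter fun e => C e ≠ 0 ∧ src e = vtx k).card +
      (univ.filter fun e => C e ≠ 0 ∧ tgt e = vtx k).card = 2
    rw [hcardS, hcardT, hcard1 (vtx k) ⟨k, hk, rfl⟩]
  · -- unit values
    intro e
    rcases hC01 e with h | h
    · exact Or.inl h
    · exact Or.inr (Or.inl h)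
  · -- nonneg
    intro e
    rcases hC01 e with h | h <;> rw [h] <;> norm_num
  · -- ≤ f
    intro e
    rcases hC01 e with h | h
    · rw [h]; exact hnn e
    · rw [h]
      obtain ⟨k, _, rfl⟩ := Finset.mem_image.1 ((hCne e).1 (by rw [h]; exact one_ne_zero))
      exact hwpos k

end Extract

section Decomp
variable {V E : Type} [Fintype V] [Fintype E] [DecidableEq V] [DecidableEq E]
  (src tgt : E → V)

set_option linter.unusedSectionVars false in
lemma flowContains_two (f C : E → ℤ) (hfnn : ∀ e, 0 ≤ f e) (hCnn : ∀ e, 0 ≤ C e)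
    (h2 : ∀ e, 2 * C e ≤ f e) : FlowContains f (fun e => 2 * C e) := by
  intro e
  have h1 := hfnn e; have h3 := hCnn e; have h4 := h2 e
  constructor
  · show |2 * C e| ≤ |f e|
    rw [abs_of_nonneg (by omega : (0:ℤ) ≤ 2 * C e), abs_of_nonneg h1]
    exact h4
  · intro h5
    have h5' : 2 * C e ≠ 0 := h5
    show 0 < 2 * C e * f e
    exact mul_pos (by omega) (by omega)

set_option linter.unusedSectionVars false in
lemma ite_sub_sum (p : E → Prop) [DecidablePred p] (g h : E → ℤ) :
    ∑ e : E, (if p e then g e - h e else 0)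
      = ∑ e : E, (if p e then g e else 0) - ∑ e : E, (if p e then h e else 0) := by
  rw [← Finset.sum_sub_distrib]
  apply Finset.sum_congr rfl
  intro e _
  split <;> simp

set_option linter.unusedSectionVars false in
lemma decomp_aux (n : ℕ) : ∀ (f : E → ℤ), IsCirculation src tgt f → (∀ e, 0 ≤ f e) →
    IsElementary src tgt f → (∑ e : E, f e).toNat = n →
    ∃ s : Finset (E → ℤ), (∀ C ∈ s, IsUnitCycleFlow src tgt C ∧ ∀ e, 0 ≤ C e) ∧
      (∀ e, f e = ∑ C ∈ s, C e) := by
  induction n using Nat.strong_induction_on with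
  | _ n ih =>
    intro f hf hnn helem hsum
    by_cases h0 : ∀ e, f e = 0
    · exact ⟨∅, by simp, fun e => by simp [h0 e]⟩
    · push_neg at h0
      obtain ⟨e0, he0⟩ := h0
      have he0' : 0 < f e0 := lt_of_le_of_ne (hnn e0) (Ne.symm he0)
      obtain ⟨C, hCunit, hCnn, hCle⟩ := extract_cycle src tgt f hf hnn e0 he0'
      set f' : E → ℤ := fun e => f e - C e with hf'
      have hf'nn : ∀ e, 0 ≤ f' e := fun e => by
        have := hCle e; simp only [hf']; omega
      have hf'le : ∀ e, f' e ≤ f e := fun e => by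
        have := hCnn e; simp only [hf']; omega
      have hf'circ : IsCirculation src tgt f' := by
        intro v
        have h1 := hf v
        have h2 := hCunit.1.1 v
        simp only [hf']
        rw [ite_sub_sum (fun e => tgt e = v) f C, ite_sub_sum (fun e => src e = v) f C]
        omega
      have hf'elem : IsElementary src tgt f' := by
        rintro ⟨C', hC'unit, hcont⟩
        refine helem ⟨C', hC'unit, fun e => ?_⟩
        obtain ⟨ha, hb⟩ := hcont e
        have h3 := hf'nn e
        have h4 := hf'le e
        have h5 := hnn e
        rw [abs_of_nonneg h3] at ha
        constructor
        · rw [abs_of_nonneg h5]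
          calc |2 * C' e| ≤ f' e := ha
          _ ≤ f e := h4
        · intro hne
          have hprod := hb hne
          rcases mul_pos_iff.1 hprod with ⟨hx, hy⟩ | ⟨hx, hy⟩
          · exact mul_pos hx (by omega)
          · omega
      -- total value decreases
      obtain ⟨e1, he1⟩ := hCunit.1.2.1
      have hsumC : 0 < ∑ e : E, C e := by
        apply Finset.sum_pos' (fun e _ => hCnn e)
        exact ⟨e1, Finset.mem_univ e1, lt_of_le_of_ne (hCnn e1) (Ne.symm he1)⟩
      have hsplit : ∑ e : E, f' e = ∑ e : E, f e - ∑ e : E, C e := by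
        simp only [hf']
        rw [Finset.sum_sub_distrib]
      have hf'sum : (∑ e : E, f' e).toNat < n := by
        have h6 : 0 ≤ ∑ e : E, f' e := Finset.sum_nonneg (fun e _ => hf'nn e)
        have h7 : 0 ≤ ∑ e : E, f e := Finset.sum_nonneg (fun e _ => hnn e)
        omega
      obtain ⟨s', hs'unit, hs'sum⟩ := ih _ hf'sum f' hf'circ hf'nn hf'elem rfl
      have hCnot : C ∉ s' := by
        intro hmem
        refine helem ⟨C, hCunit, flowContains_two f C hnn hCnn fun e => ?_⟩
        have h8 : C e ≤ ∑ C' ∈ s', C' e :=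
          Finset.single_le_sum (fun C' hC' => (hs'unit C' hC').2 e) hmem
        have h9 := hs'sum e
        simp only [hf'] at h9
        linarith
      refine ⟨insert C s', ?_, ?_⟩
      · intro C'' hC''
        rcases Finset.mem_insert.1 hC'' with rfl | h
        · exact ⟨hCunit, hCnn⟩
        · exact hs'unit C'' h
      · intro e
        rw [Finset.sum_insert hCnot]
        have h9 := hs'sum e
        simp only [hf'] at h9
        linarith

set_option linter.unusedSectionVars false in
lemma decomp (f : E → ℤ) (hf : IsCirculation src tgt f) (hnn : ∀ e, 0 ≤ f e)
    (helem : IsElementary src tgt f) :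
    ∃ s : Finset (E → ℤ), (∀ C ∈ s, IsUnitCycleFlow src tgt C ∧ ∀ e, 0 ≤ C e) ∧
      (∀ e, f e = ∑ C ∈ s, C e) :=
  decomp_aux src tgt _ f hf hnn helem rfl
end Decomp

section Rank
variable {V E : Type} [Fintype V] [Fintype E] [DecidableEq V] [DecidableEq E]
  (src tgt : E → V)

def incid : (E → ℚ) →ₗ[ℚ] (V → ℚ) where
  toFun x := fun v => ∑ e : E, ((if tgt e = v then x e else 0) - (if src e = v then x e else 0))
  map_add' x y := by
    funext v
    simp only [Pi.add_apply]
    rw [← Finset.sum_add_distrib]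
    apply Finset.sum_congr rfl
    intro e _
    split <;> split <;> ring
  map_smul' c x := by
    funext v
    simp only [RingHom.id_apply, Pi.smul_apply, smul_eq_mul, Finset.mul_sum]
    apply Finset.sum_congr rfl
    intro e _
    split <;> split <;> ring

set_option linter.unusedSectionVars false in
lemma circ_mem_ker (f : E → ℤ) (hf : IsCirculation src tgt f) :
    incid src tgt (fun e => (f e : ℚ)) = 0 := by
  funext v
  have h := hf v
  have h' : ((∑ e : E, if tgt e = v then f e else 0 : ℤ) : ℚ)
      = ((∑ e : E, if src e = v then f e else 0 : ℤ) : ℚ) := by exact_mod_cast h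
  push_cast at h'
  show ∑ e : E, ((if tgt e = v then (f e : ℚ) else 0) - (if src e = v then (f e : ℚ) else 0)) = 0
  rw [Finset.sum_sub_distrib]
  rw [show (∑ e : E, if tgt e = v then (f e : ℚ) else 0)
      = ∑ e : E, if src e = v then (f e : ℚ) else 0 from by
    convert h' using 2 <;> rename_i e <;> split <;> simp]
  ring

/-- characteristic function of a vertex -/
def chi (a : V) : V → ℚ := fun v => if a = v then 1 else 0

set_option linter.unusedSectionVars false in
lemma delta_mem (e : E) :
    chi (tgt e) - chi (src e) ∈ LinearMap.range (incid src tgt) := by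
  refine ⟨fun e' => if e' = e then 1 else 0, ?_⟩
  funext v
  show ∑ e' : E, ((if tgt e' = v then (if e' = e then (1:ℚ) else 0) else 0)
      - (if src e' = v then (if e' = e then (1:ℚ) else 0) else 0))
    = (chi (tgt e) - chi (src e)) v
  rw [Finset.sum_eq_single e]
  · simp only [if_pos rfl, Pi.sub_apply, chi]
    congr 1 <;> split <;> simp_all
  · intro e' _ hne
    rw [if_neg hne]
    simp
  · intro h
    exact absurd (Finset.mem_univ e) h

set_option linter.unusedSectionVars false in
lemma reach_mem (a b : V) (h : Reach src tgt Set.univ a b) :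
    chi b - chi a ∈ LinearMap.range (incid src tgt) := by
  induction h with
  | refl => simpa using zero_mem (LinearMap.range (incid src tgt))
  | @tail x c hab hbc ih =>
    have step : chi c - chi x ∈ LinearMap.range (incid src tgt) := by
      rcases hbc with ⟨e, _, ⟨h1, h2⟩ | ⟨h1, h2⟩⟩
      · rw [← h1, ← h2]; exact delta_mem src tgt e
      · have := neg_mem (delta_mem src tgt e)
        rw [← h1, ← h2]
        convert this using 1
        ext v; simp [chi]; try ring
    have := add_mem step ih
    convert this using 1
    ext v; simp [chi]; try ring

set_option linter.unusedSectionVars false in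
lemma rank_lower (hconn : GraphConnected src tgt) (v0 : V) :
    Fintype.card V ≤ Module.finrank ℚ (LinearMap.range (incid src tgt)) + 1 := by
  classical
  set R := LinearMap.range (incid src tgt)
  set u : {a : V // a ≠ v0} → R :=
    fun a => ⟨chi a.1 - chi v0, reach_mem src tgt v0 a.1 (hconn v0 a.1)⟩ with hu
  have hcomp : (R.subtype ∘ u) = fun a : {a : V // a ≠ v0} => chi a.1 - chi v0 := rfl
  have hambient : LinearIndependent ℚ (fun a : {a : V // a ≠ v0} => chi a.1 - chi v0) := by
    rw [Fintype.linearIndependent_iff]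
    intro g hg a
    have h1 := congrFun hg a.1
    rw [Finset.sum_apply] at h1
    simp only [Pi.zero_apply] at h1
    rw [show ∑ b : {a : V // a ≠ v0}, (g b • (chi b.1 - chi v0)) a.1
        = ∑ b : {a : V // a ≠ v0}, g b * (if b.1 = a.1 then 1 else 0) from
      Finset.sum_congr rfl fun b _ => by
        simp only [Pi.smul_apply, Pi.sub_apply, smul_eq_mul, chi]
        rw [if_neg (fun h : v0 = a.1 => a.2 h.symm)]
        ring] at h1
    rw [Finset.sum_eq_single a] at h1
    · rw [if_pos rfl, mul_one] at h1; exact h1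
    · intro b _ hne
      rw [if_neg (fun h => hne (Subtype.ext h)), mul_zero]
    · intro h; exact absurd (Finset.mem_univ a) h
  have hindep : LinearIndependent ℚ u := by
    apply LinearIndependent.of_comp R.subtype
    rw [show (⇑R.subtype ∘ u) = fun a : {a : V // a ≠ v0} => chi a.1 - chi v0 from rfl]
    exact hambient
  have hcard := hindep.fintype_card_le_finrank
  have h2 : Fintype.card {a : V // a ≠ v0} = Fintype.card V - 1 := by
    simp [Fintype.card_subtype_compl]
  have h3 : 1 ≤ Fintype.card V := Fintype.card_pos_iff.2 ⟨v0⟩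
  omega

set_option linter.unusedSectionVars false in
lemma ker_bound (hconn : GraphConnected src tgt) (v0 : V) (r : ℕ)
    (hrank : Fintype.card E + 1 = Fintype.card V + r) :
    Module.finrank ℚ (LinearMap.ker (incid src tgt)) ≤ r := by
  have h1 := LinearMap.finrank_range_add_finrank_ker (incid src tgt)
  rw [Module.finrank_pi] at h1
  have h2 := rank_lower src tgt hconn v0
  omega

end Rank

section Main
variable {V E : Type} [Fintype V] [Fintype E] [DecidableEq V] [DecidableEq E]
  (src tgt : E → V)

set_option linter.unusedSectionVars false in
lemma dep_contra (f : E → ℤ) (hnn : ∀ e, 0 ≤ f e) (helem : IsElementary src tgt f)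
    (s : Finset (E → ℤ))
    (hs : ∀ C ∈ s, IsUnitCycleFlow src tgt C ∧ ∀ e, 0 ≤ C e)
    (hsum : ∀ e, f e = ∑ C ∈ s, C e)
    (g : {C // C ∈ s} → ℚ)
    (hg : ∑ i : {C // C ∈ s}, g i • (fun e => ((i : E → ℤ) e : ℚ)) = 0)
    (C0 : {C // C ∈ s}) (hpos : 0 < g C0) : False := by
  classical
  have hval : ∀ (i : {C // C ∈ s}) e, (i : E → ℤ) e = 0 ∨ (i : E → ℤ) e = 1 := by
    intro i e
    rcases (hs i i.2).2 e |>.lt_or_eq with h | h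
    · rcases (hs i i.2).1.2 e with h' | h' | h'
      · exact Or.inl h'
      · exact Or.inr h'
      · omega
    · exact Or.inl h.symm
  have key : ∀ e, (C0 : E → ℤ) e = 1 → 2 ≤ f e := by
    intro e he
    have h1 : ∑ i : {C // C ∈ s}, g i * ((i : E → ℤ) e : ℚ) = 0 := by
      have h2 := congrFun hg e
      rw [Finset.sum_apply] at h2
      simpa using h2
    set P := Finset.univ.filter (fun i : {C // C ∈ s} => 0 < g i) with hP
    have hsplit : ∑ i ∈ P, g i * ((i : E → ℤ) e : ℚ)
        + ∑ i ∈ Pᶜ, g i * ((i : E → ℤ) e : ℚ) = 0 := by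
      rw [Finset.sum_add_sum_compl]; exact h1
    have hPpos : (g C0 : ℚ) ≤ ∑ i ∈ P, g i * ((i : E → ℤ) e : ℚ) := by
      calc (g C0 : ℚ) = g C0 * ((C0 : E → ℤ) e : ℚ) := by rw [he]; push_cast; ring
      _ ≤ ∑ i ∈ P, g i * ((i : E → ℤ) e : ℚ) :=
          Finset.single_le_sum (f := fun i => g i * (((i : E → ℤ)) e : ℚ))
          (fun i hi => mul_nonneg (le_of_lt (Finset.mem_filter.1 hi).2)
            (by rcases hval i e with h|h <;> rw [h] <;> norm_num))
          (Finset.mem_filter.2 ⟨Finset.mem_univ _, hpos⟩)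
    obtain ⟨C1, hC1mem, hC1⟩ : ∃ i ∈ Pᶜ, g i * ((i : E → ℤ) e : ℚ) < 0 := by
      by_contra hcon
      push_neg at hcon
      have h3 : (0:ℚ) ≤ ∑ i ∈ Pᶜ, g i * ((i : E → ℤ) e : ℚ) :=
        Finset.sum_nonneg hcon
      linarith
    have hC1e : (C1 : E → ℤ) e = 1 := by
      rcases hval C1 e with h | h
      · rw [h] at hC1; norm_num at hC1
      · exact h
    have hC1ne : C1 ≠ C0 := by
      intro h
      rw [h] at hC1mem
      exact (Finset.mem_compl.1 hC1mem) (Finset.mem_filter.2 ⟨Finset.mem_univ _, hpos⟩)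
    have hvalne : (C1 : E → ℤ) ≠ (C0 : E → ℤ) := fun h => hC1ne (Subtype.ext h)
    have hpair : (C0 : E → ℤ) e + (C1 : E → ℤ) e ≤ ∑ C ∈ s, C e := by
      have hsub : ({(C0 : E → ℤ), (C1 : E → ℤ)} : Finset (E → ℤ)) ⊆ s := by
        intro x hx
        rcases Finset.mem_insert.1 hx with rfl | hx
        · exact C0.2
        · rw [Finset.mem_singleton.1 hx]; exact C1.2
      calc (C0 : E → ℤ) e + (C1 : E → ℤ) e
          = ∑ C ∈ ({(C0 : E → ℤ), (C1 : E → ℤ)} : Finset (E → ℤ)), C e := by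
            rw [Finset.sum_pair (fun h => hvalne h.symm)]
        _ ≤ ∑ C ∈ s, C e := Finset.sum_le_sum_of_subset_of_nonneg hsub
            (fun C hC _ => (hs C hC).2 e)
    rw [← hsum e, he, hC1e] at hpair
    omega
  refine helem ⟨(C0 : E → ℤ), (hs C0 C0.2).1,
    flowContains_two f _ hnn ((hs C0 C0.2).2) fun e => ?_⟩
  rcases hval C0 e with h | h
  · rw [h]; simpa using hnn e
  · rw [h]; simpa using key e h

/-- A non-negative elementary circulation on a connected graph with cycle rank `r`
is the sum of at most `r` distinct non-negative unit cycle flows. -/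
theorem elementary_nonneg_decomposition {V E : Type} [Fintype V] [Fintype E]
    [DecidableEq V] [DecidableEq E]
    (src tgt : E → V) (r : ℕ)
    (hconn : GraphConnected src tgt)
    (hrank : Fintype.card E + 1 = Fintype.card V + r)
    (f : E → ℤ) (hf : IsCirculation src tgt f)
    (hnonneg : ∀ e, 0 ≤ f e)
    (helem : IsElementary src tgt f) :
    ∃ s : Finset (E → ℤ), s.card ≤ r ∧
      (∀ C ∈ s, IsUnitCycleFlow src tgt C ∧ ∀ e, 0 ≤ C e) ∧
      (∀ e, f e = ∑ C ∈ s, C e) := by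
  classical
  obtain ⟨s, hsunit, hssum⟩ := decomp src tgt f hf hnonneg helem
  refine ⟨s, ?_, hsunit, hssum⟩
  rcases s.eq_empty_or_nonempty with rfl | ⟨Cw, hCw⟩
  · simp
  · obtain ⟨e1, -⟩ := (hsunit Cw hCw).1.1.2.1
    set v0 : V := src e1 with hv0
    have hindepAmb : LinearIndependent ℚ
        (fun i : {C // C ∈ s} => fun e => ((i : E → ℤ) e : ℚ)) := by
      by_contra h
      obtain ⟨g, hg, i0, hi0⟩ := Fintype.not_linearIndependent_iff.1 h
      rcases hi0.lt_or_gt with hneg | hpos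
      · refine dep_contra src tgt f hnonneg helem s hsunit hssum (-g) ?_ i0 ?_
        · simp only [Pi.neg_apply, neg_smul, Finset.sum_neg_distrib, hg, neg_zero]
        · simpa using hneg
      · exact dep_contra src tgt f hnonneg helem s hsunit hssum g hg i0 hpos
    set u : {C // C ∈ s} → LinearMap.ker (incid src tgt) :=
      fun i => ⟨(fun e => ((i : E → ℤ) e : ℚ)),
        LinearMap.mem_ker.2 (circ_mem_ker src tgt _ (hsunit i i.2).1.1.1)⟩ with hu
    have hindep : LinearIndependent ℚ u := by
      apply LinearIndependent.of_comp (LinearMap.ker (incid src tgt)).subtype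
      exact hindepAmb
    have hcard := hindep.fintype_card_le_finrank
    rw [Fintype.card_coe] at hcard
    exact le_trans hcard (ker_bound src tgt hconn v0 r hrank)
end Main
end
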